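/- Let p be a prime, q = p^n, and π a finite p-group. Then the exponent of the abelian group M_q defined from the Witt vectors of 𝔽_q as in the context divides the exponent of π; that is, p^e · M_q = 0 where p^e = exp(π). -/

import Mathlib

namespace GRJJ


variable (R : Type*) [CommRing R] (π : Type*) [Group π]

/-- The augmentation homomorphism of a group ring, sending every `g : π` to `1`. -/
noncomputable def aug : MonoidAlgebra R π →ₐ[R] R :=
  MonoidAlgebra.lift R R π 1

/-- The augmentation ideal of a group ring. -/
noncomputable def augIdeal : Ideal (MonoidAlgebra R π) :=
  RingHom.ker (aug R π).toRingHom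

/-- The group `1 + I` of normalized units of the group ring `R[π]`:
units `u` with `u - 1` in the augmentation ideal. -/
noncomputable def normalizedUnits : Subgroup (MonoidAlgebra R π)ˣ where
  carrier := {u | (u : MonoidAlgebra R π) - 1 ∈ augIdeal R π}
  one_mem' := by simp
  mul_mem' := by
    intro u v hu hv
    have h : ((u * v : (MonoidAlgebra R π)ˣ) : MonoidAlgebra R π) - 1 =
        (u : MonoidAlgebra R π) * ((v : MonoidAlgebra R π) - 1) +
          ((u : MonoidAlgebra R π) - 1) := by
      push_cast
      noncomm_ring
    show ((u * v : (MonoidAlgebra R π)ˣ) : MonoidAlgebra R π) - 1 ∈ augIdeal R π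
    rw [h]
    exact (augIdeal R π).add_mem ((augIdeal R π).mul_mem_left _ hv) hu
  inv_mem' := by
    intro u hu
    have h : ((u⁻¹ : (MonoidAlgebra R π)ˣ) : MonoidAlgebra R π) - 1 =
        ((u⁻¹ : (MonoidAlgebra R π)ˣ) : MonoidAlgebra R π) *
          (1 - (u : MonoidAlgebra R π)) := by
      rw [mul_sub, mul_one, Units.inv_mul]
    show ((u⁻¹ : (MonoidAlgebra R π)ˣ) : MonoidAlgebra R π) - 1 ∈ augIdeal R π
    rw [h]
    refine (augIdeal R π).mul_mem_left _ ?_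
    simpa using (augIdeal R π).neg_mem hu



variable (p : ℕ) [Fact p.Prime]

/-- The map `Ψ : R_q[π] → R_q[π]`, `Σ aₘ g ↦ Σ φ(aₘ) gᵖ`, where `φ` is the Frobenius
endomorphism of the Witt vectors `R_q = W(𝔽_q)`. -/
noncomputable def psi (K : Type*) [CommRing K] (π : Type*) [Group π]
    (x : MonoidAlgebra (WittVector p K) π) : MonoidAlgebra (WittVector p K) π :=
  MonoidAlgebra.ofCoeff (Finsupp.mapDomain (fun g : π => g ^ p)
    (Finsupp.mapRange (⇑(WittVector.frobenius : WittVector p K →+* WittVector p K))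
      (map_zero _) x.coeff))

/-- The subgroup of relations defining `M_q`: the additive subgroup of `R_q[π]` generated
by the elements `x - g⁻¹xg` and `p•x - Ψ(x)` for `x` in the augmentation ideal. -/
noncomputable def MqRel (K : Type*) [CommRing K] (π : Type*) [Group π] :
    AddSubgroup (MonoidAlgebra (WittVector p K) π) :=
  AddSubgroup.closure
    ({y | ∃ x ∈ augIdeal (WittVector p K) π, ∃ g : π,
        y = x - MonoidAlgebra.of (WittVector p K) π g⁻¹ * x *
          MonoidAlgebra.of (WittVector p K) π g} ∪
      {y | ∃ x ∈ augIdeal (WittVector p K) π, y = p • x - psi p K π x})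

/-- The abelian group `M_q`: the quotient of the augmentation ideal of `W(𝔽_q)[π]` by the
relations `x ≡ g⁻¹xg` and `p•x ≡ Ψ(x)`. -/
abbrev Mq (K : Type*) [CommRing K] (π : Type*) [Group π] :=
  ↥(augIdeal (WittVector p K) π).toAddSubgroup ⧸
    ((MqRel p K π).addSubgroupOf (augIdeal (WittVector p K) π).toAddSubgroup)



section Aux

variable (p : ℕ) [Fact p.Prime] (K : Type*) [CommRing K] (π : Type*) [Group π]

lemma aug_apply_eq (f : MonoidAlgebra R π) : aug R π f = f.coeff.sum fun _ a => a := by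
  simp [aug, MonoidAlgebra.lift_apply]

lemma mem_augIdeal_iff (f : MonoidAlgebra R π) :
    f ∈ augIdeal R π ↔ (f.coeff.sum fun _ a => a) = 0 := by
  rw [augIdeal, RingHom.mem_ker, ← aug_apply_eq]; rfl

lemma psi_iterate (k : ℕ) (x : MonoidAlgebra (WittVector p K) π) :
    (psi p K π)^[k] x = MonoidAlgebra.ofCoeff (Finsupp.mapDomain (fun g : π => g ^ p ^ k)
      (Finsupp.mapRange (⇑((WittVector.frobenius : WittVector p K →+* WittVector p K) ^ k))
        (map_zero _) x.coeff)) := by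
  induction k with
  | zero =>
      rw [Function.iterate_zero, id_eq,
        show (fun g : π => g ^ p ^ 0) = id from funext fun g => by simp,
        Finsupp.mapDomain_id]
      refine (MonoidAlgebra.ext (Finsupp.ext fun a => ?_)).symm
      simp [Finsupp.mapRange_apply, MonoidAlgebra.coeff_ofCoeff]
  | succ k ih =>
      rw [Function.iterate_succ_apply', ih, psi, MonoidAlgebra.coeff_ofCoeff,
        ← Finsupp.mapDomain_mapRange _ _ _ _ (map_add _),
        ← Finsupp.mapDomain_comp]
      congr 2
      · funext g
        simp [Function.comp, ← pow_mul, pow_succ]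
      · refine Finsupp.ext fun a => ?_
        simp only [Finsupp.mapRange_apply, RingHom.coe_pow, Function.comp_apply,
          Function.iterate_succ_apply']

lemma psi_iterate_mem (k : ℕ) (x : MonoidAlgebra (WittVector p K) π)
    (hx : x ∈ augIdeal (WittVector p K) π) :
    (psi p K π)^[k] x ∈ augIdeal (WittVector p K) π := by
  rw [mem_augIdeal_iff] at hx ⊢
  rw [psi_iterate, MonoidAlgebra.coeff_ofCoeff, Finsupp.sum_mapDomain_index (by simp) (by simp),
    Finsupp.sum_mapRange_index (by simp)]
  calc (x.coeff.sum fun _ a => ((WittVector.frobenius : WittVector p K →+* WittVector p K) ^ k) a)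
      = ((WittVector.frobenius : WittVector p K →+* WittVector p K) ^ k)
        (x.coeff.sum fun _ a => a) := (map_finsuppSum _ _ _).symm
    _ = 0 := by rw [hx, map_zero]

lemma psi_iterate_eq_zero (e : ℕ) (hpow : ∀ g : π, g ^ p ^ e = 1)
    (x : MonoidAlgebra (WittVector p K) π) (hx : x ∈ augIdeal (WittVector p K) π) :
    (psi p K π)^[e] x = 0 := by
  rw [mem_augIdeal_iff] at hx
  rw [psi_iterate]
  have h1 : (fun g : π => g ^ p ^ e) = fun _ => (1 : π) := funext hpow
  rw [h1]
  set y := Finsupp.mapRange (⇑((WittVector.frobenius : WittVector p K →+* WittVector p K) ^ e))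
      (map_zero _) x.coeff with hy
  have hysum : (y.sum fun _ a => a) = 0 := by
    rw [hy, Finsupp.sum_mapRange_index (by simp)]
    calc (x.coeff.sum fun _ a => ((WittVector.frobenius : WittVector p K →+* WittVector p K) ^ e) a)
        = ((WittVector.frobenius : WittVector p K →+* WittVector p K) ^ e)
          (x.coeff.sum fun _ a => a) := (map_finsuppSum _ _ _).symm
      _ = 0 := by rw [hx, map_zero]
  have : Finsupp.mapDomain (fun _ : π => (1 : π)) y
      = Finsupp.single (1 : π) (y.sum fun _ a => a) := by
    rw [Finsupp.mapDomain]
    exact (map_finsuppSum (Finsupp.singleAddHom (1 : π)) y (fun _ a => a)).symm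
  rw [this, hysum, Finsupp.single_zero, MonoidAlgebra.ofCoeff_zero]

lemma smul_sub_psi_iterate_mem (k : ℕ) (x : MonoidAlgebra (WittVector p K) π)
    (hx : x ∈ augIdeal (WittVector p K) π) :
    p ^ k • x - (psi p K π)^[k] x ∈ MqRel p K π := by
  induction k with
  | zero => simpa using (MqRel p K π).zero_mem
  | succ k ih =>
      have h1 : p ^ (k + 1) • x - (psi p K π)^[k + 1] x =
          p • (p ^ k • x - (psi p K π)^[k] x) +
            (p • (psi p K π)^[k] x - psi p K π ((psi p K π)^[k] x)) := by
        rw [Function.iterate_succ_apply', smul_sub, smul_smul, ← pow_succ']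
        abel
      rw [h1]
      refine (MqRel p K π).add_mem ((MqRel p K π).nsmul_mem ih p) ?_
      exact AddSubgroup.subset_closure
        (Or.inr ⟨(psi p K π)^[k] x, psi_iterate_mem p K π k x hx, rfl⟩)

end Aux

/-- part of the proof of Theorem 1.3: for a finite `p`-group `π` and
`K = 𝔽_q` with `q = pⁿ` elements, the exponent of `M_q` divides the exponent of `π`:
`exp(π) • M_q = 0`. -/


theorem exponent_smul_Mq (p n : ℕ) [Fact p.Prime] (hn : 0 < n)
    (K : Type*) [Field K] [Fintype K] (hK : Fintype.card K = p ^ n)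
    (π : Type*) [Group π] [Finite π] (hπ : IsPGroup p π) :
    ∀ x : Mq p K π, Monoid.exponent π • x = 0 := by
  obtain ⟨m, hm⟩ := IsPGroup.iff_card.mp hπ
  have hdvd : Monoid.exponent π ∣ p ^ m := hm ▸ Group.exponent_dvd_nat_card
  obtain ⟨e, _, he⟩ := (Nat.dvd_prime_pow (Fact.out : p.Prime)).mp hdvd
  intro x
  induction x using QuotientAddGroup.induction_on with
  | H v =>
    have : Monoid.exponent π • (QuotientAddGroup.mk v : Mq p K π)
        = QuotientAddGroup.mk (Monoid.exponent π • v) := rfl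
    rw [this, QuotientAddGroup.eq_zero_iff]
    show (Monoid.exponent π • v : _) ∈ _
    rw [AddSubgroup.mem_addSubgroupOf]
    have hv := v.2
    have hval : ((Monoid.exponent π • v : (augIdeal (WittVector p K) π).toAddSubgroup) :
        MonoidAlgebra (WittVector p K) π) = Monoid.exponent π • (v : MonoidAlgebra (WittVector p K) π) := rfl
    rw [hval, he]
    have hpow : ∀ g : π, g ^ p ^ e = 1 := fun g => he ▸ Monoid.pow_exponent_eq_one g
    have h0 := psi_iterate_eq_zero p K π e hpow (v : MonoidAlgebra (WittVector p K) π) hv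
    have := smul_sub_psi_iterate_mem p K π e (v : MonoidAlgebra (WittVector p K) π) hv
    rwa [h0, sub_zero] at this


end GRJJ
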